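/- Fix an odd integer n ≥ 3. In ℤ^n, the subgroup generated by the vectors e_i − e_{i+2} (1 ≤ i ≤ n−2) together with e_{n−1} and 2e_n is equal to the subgroup generated by the vectors e_i − e_{i+2} (1 ≤ i ≤ n−2) together with 2e_1 and e_2. (In root-theoretic terms: for n odd, the lattice ℤ(S_0^+ ∪ {2α_n}) generated by α_1+α_2, …, α_{n−1}+α_n, 2α_n equals the lattice generated by 2ᾱ_0, ᾱ_0+α_1, α_1+α_2, …, α_{n−2}+α_{n−1}.) -/

import Mathlib

private lemma chain_mem (n : ℕ) (S : Set (Fin n → ℤ))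
    (hS : ∀ (j : ℕ) (hj : j < n) (h : j + 2 < n),
      Pi.single (⟨j, hj⟩ : Fin n) (1 : ℤ) -
        Pi.single (⟨j + 2, h⟩ : Fin n) (1 : ℤ) ∈ S)
    (m j : ℕ) (h : j + 2 * m < n) :
    Pi.single (⟨j, by omega⟩ : Fin n) (1 : ℤ) -
      Pi.single (⟨j + 2 * m, h⟩ : Fin n) (1 : ℤ) ∈ AddSubgroup.closure S := by
  induction m with
  | zero =>
      have : (⟨j + 2 * 0, h⟩ : Fin n) = ⟨j, by omega⟩ := by
        ext; simp
      rw [this, sub_self]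
      exact zero_mem _
  | succ m ih =>
      have h1 : j + 2 * m < n := by omega
      have h2 : (j + 2 * m) + 2 < n := by omega
      have key : (Pi.single (⟨j, by omega⟩ : Fin n) (1 : ℤ) : Fin n → ℤ) -
          Pi.single (⟨j + 2 * (m + 1), h⟩ : Fin n) (1 : ℤ) =
          (Pi.single (⟨j, by omega⟩ : Fin n) (1 : ℤ) -
            Pi.single (⟨j + 2 * m, h1⟩ : Fin n) (1 : ℤ)) +
          (Pi.single (⟨j + 2 * m, by omega⟩ : Fin n) (1 : ℤ) -
            Pi.single (⟨(j + 2 * m) + 2, h2⟩ : Fin n) (1 : ℤ)) := by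
        have : (⟨j + 2 * (m + 1), h⟩ : Fin n) = ⟨(j + 2 * m) + 2, h2⟩ := by
          ext; simp; omega
        rw [this]; abel
      rw [key]
      exact add_mem (ih h1) (AddSubgroup.subset_closure (hS _ _ h2))

/-- Case `D_{n+1}^{(2)}`, `n` odd, in the realization of `B_n` in `ℤ^n` with simple
roots `α_i = e_i − e_{i+1}` (`1 ≤ i ≤ n-1`) and `α_n = e_n` (here `e_1, …, e_n` is
the standard basis, 0-based in Lean): the lattice `ℤ(S_0^+ ∪ {2α_n})`, generated by
`α_1+α_2 = e_1−e_3, …, α_{n-2}+α_{n-1} = e_{n-2}−e_n, α_{n-1}+α_n = e_{n-1}, 2α_n = 2e_n`,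
equals the lattice generated by the vectors `e_i − e_{i+2}` together with
`2ᾱ_0 = −2e_1` and `ᾱ_0+α_1 = −e_2` (up to sign, `2e_1` and `e_2`). -/
theorem lattice_eq_Dn2_odd
    (n : ℕ) (hn : 3 ≤ n) (hodd : Odd n) :
    AddSubgroup.closure
      ({v : Fin n → ℤ | ∃ (j : ℕ) (h : j + 2 < n),
          v = Pi.single (⟨j, by omega⟩ : Fin n) (1 : ℤ) -
            Pi.single (⟨j + 2, h⟩ : Fin n) (1 : ℤ)} ∪
       {Pi.single (⟨n - 2, by omega⟩ : Fin n) (1 : ℤ),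
        (2 : ℤ) • Pi.single (⟨n - 1, by omega⟩ : Fin n) (1 : ℤ)}) =
    AddSubgroup.closure
      ({v : Fin n → ℤ | ∃ (j : ℕ) (h : j + 2 < n),
          v = Pi.single (⟨j, by omega⟩ : Fin n) (1 : ℤ) -
            Pi.single (⟨j + 2, h⟩ : Fin n) (1 : ℤ)} ∪
       {(2 : ℤ) • Pi.single (⟨0, by omega⟩ : Fin n) (1 : ℤ),
        Pi.single (⟨1, by omega⟩ : Fin n) (1 : ℤ)}) := by
  obtain ⟨k, hk⟩ := hodd
  set D : Set (Fin n → ℤ) :=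
    {v : Fin n → ℤ | ∃ (j : ℕ) (h : j + 2 < n),
      v = Pi.single (⟨j, by omega⟩ : Fin n) (1 : ℤ) -
        Pi.single (⟨j + 2, h⟩ : Fin n) (1 : ℤ)} with hD
  have hDmem : ∀ (j : ℕ) (h : j + 2 < n),
      Pi.single (⟨j, by omega⟩ : Fin n) (1 : ℤ) -
        Pi.single (⟨j + 2, h⟩ : Fin n) (1 : ℤ) ∈ D := by
    intro j h; exact ⟨j, h, rfl⟩
  -- membership of chains in each closure
  apply le_antisymm <;> rw [AddSubgroup.closure_le] <;> rintro x (hx | hx)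
  · exact AddSubgroup.subset_closure (Or.inl hx)
  · -- x is e_{n-2} or 2 e_{n-1}, show ∈ RHS closure
    have hsub : D ⊆ (D ∪ {(2 : ℤ) • Pi.single (⟨0, by omega⟩ : Fin n) (1 : ℤ),
        Pi.single (⟨1, by omega⟩ : Fin n) (1 : ℤ)}) := Set.subset_union_left
    have hmono := AddSubgroup.closure_mono hsub
    rcases hx with hx | hx
    · -- e_{n-2} = e_1 - (e_1 - e_{n-2})
      have hm : 1 + 2 * (k - 1) < n := by omega
      have hch := chain_mem n _ (fun j _ h => hsub (hDmem j h)) (k - 1) 1 hm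
      have he1 : Pi.single (⟨1, by omega⟩ : Fin n) (1 : ℤ) ∈
          AddSubgroup.closure (D ∪ {(2 : ℤ) • Pi.single (⟨0, by omega⟩ : Fin n) (1 : ℤ),
            Pi.single (⟨1, by omega⟩ : Fin n) (1 : ℤ)}) :=
        AddSubgroup.subset_closure (Or.inr (Or.inr rfl))
      have hidx : (⟨1 + 2 * (k - 1), hm⟩ : Fin n) = ⟨n - 2, by omega⟩ := by
        ext; simp; omega
      rw [hidx] at hch
      have := sub_mem he1 hch
      simpa [hx] using this
    · -- 2 e_{n-1} = 2 e_0 - 2 (e_0 - e_{n-1})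
      simp only [Set.mem_singleton_iff] at hx
      have hm : 0 + 2 * k < n := by omega
      have hch := chain_mem n _ (fun j _ h => hsub (hDmem j h)) k 0 hm
      have he0 : (2 : ℤ) • Pi.single (⟨0, by omega⟩ : Fin n) (1 : ℤ) ∈
          AddSubgroup.closure (D ∪ {(2 : ℤ) • Pi.single (⟨0, by omega⟩ : Fin n) (1 : ℤ),
            Pi.single (⟨1, by omega⟩ : Fin n) (1 : ℤ)}) :=
        AddSubgroup.subset_closure (Or.inr (Or.inl rfl))
      have hidx : (⟨0 + 2 * k, hm⟩ : Fin n) = ⟨n - 1, by omega⟩ := by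
        ext; simp; omega
      rw [hidx] at hch
      have := sub_mem he0 (zsmul_mem hch 2)
      have heq : (2 : ℤ) • (Pi.single (⟨n - 1, by omega⟩ : Fin n) (1 : ℤ) : Fin n → ℤ) =
          (2 : ℤ) • Pi.single (⟨0, by omega⟩ : Fin n) (1 : ℤ) -
          (2 : ℤ) • (Pi.single (⟨0, by omega⟩ : Fin n) (1 : ℤ) -
            Pi.single (⟨n - 1, by omega⟩ : Fin n) (1 : ℤ)) := by
        simp [smul_sub]
      rw [hx, heq]
      exact this
  · exact AddSubgroup.subset_closure (Or.inl hx)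
  · have hsub : D ⊆ (D ∪ {Pi.single (⟨n - 2, by omega⟩ : Fin n) (1 : ℤ),
        (2 : ℤ) • Pi.single (⟨n - 1, by omega⟩ : Fin n) (1 : ℤ)}) := Set.subset_union_left
    rcases hx with hx | hx
    · -- 2 e_0 = 2 e_{n-1} + 2 (e_0 - e_{n-1})
      have hm : 0 + 2 * k < n := by omega
      have hch := chain_mem n _ (fun j _ h => hsub (hDmem j h)) k 0 hm
      have hen : (2 : ℤ) • Pi.single (⟨n - 1, by omega⟩ : Fin n) (1 : ℤ) ∈
          AddSubgroup.closure (D ∪ {Pi.single (⟨n - 2, by omega⟩ : Fin n) (1 : ℤ),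
            (2 : ℤ) • Pi.single (⟨n - 1, by omega⟩ : Fin n) (1 : ℤ)}) :=
        AddSubgroup.subset_closure (Or.inr (Or.inr rfl))
      have hidx : (⟨0 + 2 * k, hm⟩ : Fin n) = ⟨n - 1, by omega⟩ := by
        ext; simp; omega
      rw [hidx] at hch
      have := add_mem hen (zsmul_mem hch 2)
      have heq : (2 : ℤ) • (Pi.single (⟨0, by omega⟩ : Fin n) (1 : ℤ) : Fin n → ℤ) =
          (2 : ℤ) • Pi.single (⟨n - 1, by omega⟩ : Fin n) (1 : ℤ) +
          (2 : ℤ) • (Pi.single (⟨0, by omega⟩ : Fin n) (1 : ℤ) -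
            Pi.single (⟨n - 1, by omega⟩ : Fin n) (1 : ℤ)) := by
        simp [smul_sub]
      rw [hx, heq]
      exact this
    · -- e_1 = e_{n-2} + (e_1 - e_{n-2})
      simp only [Set.mem_singleton_iff] at hx
      have hm : 1 + 2 * (k - 1) < n := by omega
      have hch := chain_mem n _ (fun j _ h => hsub (hDmem j h)) (k - 1) 1 hm
      have hen : Pi.single (⟨n - 2, by omega⟩ : Fin n) (1 : ℤ) ∈
          AddSubgroup.closure (D ∪ {Pi.single (⟨n - 2, by omega⟩ : Fin n) (1 : ℤ),
            (2 : ℤ) • Pi.single (⟨n - 1, by omega⟩ : Fin n) (1 : ℤ)}) :=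
        AddSubgroup.subset_closure (Or.inr (Or.inl rfl))
      have hidx : (⟨1 + 2 * (k - 1), hm⟩ : Fin n) = ⟨n - 2, by omega⟩ := by
        ext; simp; omega
      rw [hidx] at hch
      have := add_mem hen hch
      have heq : (Pi.single (⟨1, by omega⟩ : Fin n) (1 : ℤ) : Fin n → ℤ) =
          Pi.single (⟨n - 2, by omega⟩ : Fin n) (1 : ℤ) +
          (Pi.single (⟨1, by omega⟩ : Fin n) (1 : ℤ) -
            Pi.single (⟨n - 2, by omega⟩ : Fin n) (1 : ℤ)) := by abel
      rw [hx, heq]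
      exact this
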